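/- arXiv:2410.16514 — 2 statements merged into one kernel-verified Lean document; each statement's English description precedes it below -/
import Mathlib

section
/- Let M be a symmetric invertible 2×2 matrix over a field with diagonal entries a, d (d ≠ 0), q = a/d, Q₁ = diag(1,-q), Q₂ = diag(q,-1), J = [[0,-1],[1,0]]. Suppose M f₊ = f₋ and M s₊ = s₋ for vectors f±, s±, and suppose r₁, r₂ are scalars with r₁ ≠ 0 such that s₊ = r₁⁻¹ • (r₂ • f₊ + J Q₂ f₊). Then s₋ = r₁⁻¹ • (r₂ • f₋ + J Q₁ f₋). -/
open Matrix

theorem stmt_7 {K : Type*} [Field K] (a b d : K) (hd : d ≠ 0)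
    (hdet : a * d - b ^ 2 ≠ 0) (fp fm sp sm : Fin 2 → K) (r₁ r₂ : K) (hr₁ : r₁ ≠ 0)
    (hf : (!![a, b; b, d] : Matrix (Fin 2) (Fin 2) K).mulVec fp = fm)
    (hs : (!![a, b; b, d] : Matrix (Fin 2) (Fin 2) K).mulVec sp = sm)
    (hrel : sp = r₁⁻¹ • (r₂ • fp +
      (!![0, -1; 1, 0] : Matrix (Fin 2) (Fin 2) K).mulVec
        ((!![a / d, 0; 0, -1] : Matrix (Fin 2) (Fin 2) K).mulVec fp))) :
    sm = r₁⁻¹ • (r₂ • fm +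
      (!![0, -1; 1, 0] : Matrix (Fin 2) (Fin 2) K).mulVec
        ((!![1, 0; 0, -(a / d)] : Matrix (Fin 2) (Fin 2) K).mulVec fm)) := by
  subst hf hs hrel
  funext i
  fin_cases i <;>
    simp [mulVec, dotProduct, Fin.sum_univ_two, Pi.smul_apply, smul_eq_mul] <;>
    field_simp <;> ring
end

section
/- Let c, s ∈ ℂ with c² - s² = 1 and let m₊, m₋ be nonzero complex numbers, ω = m₋m₊. Define M(ω) as before, s₊ = (sc(m₊ - m₊⁻¹), c²m₊⁻¹ - s²m₊), s₋ = (sc(m₋⁻¹ + m₋), s²m₋⁻¹ + c²m₋). Then M(ω) s₊ = s₋, and moreover the matrix with columns f₊ = (c²m₊ - s²m₊⁻¹, sc(m₊⁻¹ - m₊)) and s₊ has determinant 1. -/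
open Matrix

theorem stmt_17 (c s mp mm : ℂ) (h : c ^ 2 - s ^ 2 = 1) (hmp : mp ≠ 0) (hmm : mm ≠ 0) :
    let ω : ℂ := mm * mp
    let fp : Fin 2 → ℂ := ![c ^ 2 * mp - s ^ 2 * mp⁻¹, s * c * (mp⁻¹ - mp)]
    let sp : Fin 2 → ℂ := ![s * c * (mp - mp⁻¹), c ^ 2 * mp⁻¹ - s ^ 2 * mp]
    (!![c ^ 2 * ω⁻¹ + s ^ 2 * ω, c * s * (ω⁻¹ + ω);
       c * s * (ω⁻¹ + ω), c ^ 2 * ω + s ^ 2 * ω⁻¹] : Matrix (Fin 2) (Fin 2) ℂ).mulVec sp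
        = ![s * c * (mm⁻¹ + mm), s ^ 2 * mm⁻¹ + c ^ 2 * mm]
    ∧ (Matrix.of ![![fp 0, sp 0], ![fp 1, sp 1]] : Matrix (Fin 2) (Fin 2) ℂ).det = 1 := by
  intro ω fp sp
  have h1 : s ^ 2 = c ^ 2 - 1 := by linear_combination -h
  constructor
  · funext i
    fin_cases i <;>
      simp [ω, sp, mulVec, dotProduct, Fin.sum_univ_two, mul_inv] <;>
      field_simp
    · linear_combination (c * s * mp ^ 2 * (1 + mm ^ 2)) * h
    · linear_combination (mp ^ 2 * (s ^ 2 + c ^ 2 * mm ^ 2)) * h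
  · simp [fp, sp, Matrix.det_fin_two]
    field_simp
    ring_nf
    linear_combination (mp ^ 2 * (c ^ 2 - s ^ 2 + 1)) * h
end
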